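/- For every L ≥ 0 there exists a constant C > 0 such that: for every map f from EuclideanSpace ℝ (Fin 4) to EuclideanSpace ℝ (Fin 6) that is Lipschitz with constant L, and every ε ∈ (0, 1], the Lebesgue volume of the ε-thickening (Metric.thickening ε) of the image f '' (closedBall 0 1) is at most C · ε². (The image of the unit 4-ball under a Lipschitz map into ℝ⁶ has an ε-neighborhood of volume O(ε²): covering the ball by ≈ ε⁻⁴ balls of radius ε, each is mapped into a ball of radius Lε, whose ε-neighborhood has volume ≈ ε⁶.) -/

import Mathlib

open MeasureTheory Metric Finset


/-- The image of the unit 4-ball under an `L`-Lipschitz map into `ℝ⁶` has an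
`ε`-neighborhood of volume `O(ε²)`: for every `L ≥ 0` there is `C > 0` such
that for every `L`-Lipschitz `f : ℝ⁴ → ℝ⁶` and every `ε ∈ (0, 1]`, the
Lebesgue volume of the `ε`-thickening of `f '' (closedBall 0 1)` is at most
`C · ε²`. -/
theorem volume_thickening_image_ball_le (L : ℝ) (hL : 0 ≤ L) :
    ∃ C : ℝ, 0 < C ∧
      ∀ f : EuclideanSpace ℝ (Fin 4) → EuclideanSpace ℝ (Fin 6),
        (∀ x y, dist (f x) (f y) ≤ L * dist x y) →
        ∀ ε : ℝ, 0 < ε → ε ≤ 1 →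
          MeasureTheory.volume
              (Metric.thickening ε (f '' Metric.closedBall 0 1)) ≤
            ENNReal.ofReal (C * ε ^ 2) := by
  set K : ℝ := Real.sqrt Real.pi ^ 6 / Real.Gamma 4 with hK
  have hKpos : 0 < K := by
    apply div_pos
    · exact pow_pos (Real.sqrt_pos.mpr Real.pi_pos) 6
    · exact Real.Gamma_pos_of_pos (by norm_num)
  refine ⟨9 ^ 4 * (1 + L / 2) ^ 6 * K, by positivity, ?_⟩
  intro f hf ε hε hε1
  set m : ℕ := ⌈2 / ε⌉₊ + 1 with hm
  set g : (Fin 4 → ℤ) → EuclideanSpace ℝ (Fin 4) :=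
    fun k => (WithLp.toLp 2 (fun i => (k i : ℝ) * (ε / 2)) : EuclideanSpace ℝ (Fin 4)) with hg
  set S : Finset (Fin 4 → ℤ) := Fintype.piFinset fun _ => Finset.Icc (-(m : ℤ)) m with hS
  set r : ℝ := (1 + L / 2) * ε with hr
  have hrpos : 0 < r := by positivity
  -- covering of the unit ball by grid points
  have hcover : ∀ z ∈ closedBall (0 : EuclideanSpace ℝ (Fin 4)) 1,
      ∃ k ∈ S, dist z (g k) ≤ ε / 2 := by
    intro z hz
    refine ⟨fun i => round (2 * z i / ε), ?_, ?_⟩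
    · rw [hS, Fintype.mem_piFinset]
      intro i
      rw [Finset.mem_Icc, ← abs_le]
      have hzi : |z i| ≤ 1 := by
        refine le_trans ?_ (mem_closedBall_zero_iff.mp hz)
        rw [EuclideanSpace.norm_eq, ← Real.sqrt_sq (abs_nonneg (z i))]
        apply Real.sqrt_le_sqrt
        exact Finset.single_le_sum (f := fun j => ‖z j‖ ^ 2) (fun j _ => by positivity)
          (Finset.mem_univ i)
      have h1 : |(round (2 * z i / ε) : ℝ)| ≤ |2 * z i / ε| + 1 / 2 := by
        have := abs_sub_round (2 * z i / ε)
        have := abs_sub_abs_le_abs_sub ((round (2 * z i / ε) : ℝ)) (2 * z i / ε)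
        rw [abs_sub_comm] at this
        linarith
      have h2 : |2 * z i / ε| ≤ 2 / ε := by
        rw [abs_div, abs_of_pos hε, div_le_div_iff_of_pos_right hε, abs_mul]
        calc |(2:ℝ)| * |z i| ≤ |(2:ℝ)| * 1 := by gcongr
          _ = 2 := by norm_num
      have h3 : (2 : ℝ) / ε ≤ ⌈2 / ε⌉₊ := Nat.le_ceil _
      have : |(round (2 * z i / ε) : ℝ)| ≤ (m : ℝ) := by
        rw [hm]; push_cast; linarith
      have h4 : ((|round (2 * z i / ε)| : ℤ) : ℝ) ≤ (m : ℝ) := by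
        rw [Int.cast_abs]; exact this
      exact_mod_cast h4
    · have hcoord : ∀ i : Fin 4, |z i - (round (2 * z i / ε) : ℝ) * (ε / 2)| ≤ ε / 4 := by
        intro i
        have h := abs_sub_round (2 * z i / ε)
        have key : z i - (round (2 * z i / ε) : ℝ) * (ε / 2)
            = (2 * z i / ε - round (2 * z i / ε)) * (ε / 2) := by
          field_simp
        rw [key, abs_mul, abs_of_pos (by positivity : (0:ℝ) < ε / 2)]
        calc |2 * z i / ε - (round (2 * z i / ε) : ℝ)| * (ε / 2)
            ≤ (1 / 2) * (ε / 2) := by gcongr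
          _ = ε / 4 := by ring
      rw [EuclideanSpace.dist_eq]
      have : Real.sqrt (∑ i : Fin 4, dist (z i) (g (fun i => round (2 * z i / ε)) i) ^ 2)
          ≤ Real.sqrt (∑ _i : Fin 4, (ε / 4) ^ 2) := by
        apply Real.sqrt_le_sqrt
        apply Finset.sum_le_sum
        intro i _
        have : dist (z i) (g (fun i => round (2 * z i / ε)) i) ≤ ε / 4 := by
          rw [Real.dist_eq]; exact hcoord i
        exact pow_le_pow_left₀ dist_nonneg this 2
      refine le_trans this ?_
      rw [Finset.sum_const]
      simp only [Finset.card_univ, Fintype.card_fin, nsmul_eq_mul]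
      rw [show ((4 : ℕ) : ℝ) * (ε / 4) ^ 2 = (ε / 2) ^ 2 by push_cast; ring,
        Real.sqrt_sq (by positivity)]
  -- inclusion in finite union of balls
  have hincl : Metric.thickening ε (f '' closedBall 0 1) ⊆ ⋃ k ∈ S, ball (f (g k)) r := by
    intro y hy
    obtain ⟨w, hw, hwy⟩ := Metric.mem_thickening_iff.mp hy
    obtain ⟨z, hz, rfl⟩ := hw
    obtain ⟨k, hkS, hk⟩ := hcover z hz
    refine Set.mem_iUnion₂.mpr ⟨k, hkS, ?_⟩
    rw [mem_ball]
    calc dist y (f (g k)) ≤ dist y (f z) + dist (f z) (f (g k)) := dist_triangle _ _ _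
      _ < ε + L * dist z (g k) := by
          have := hf z (g k)
          linarith
      _ ≤ ε + L * (ε / 2) := by nlinarith [hf z (g k)]
      _ = r := by rw [hr]; ring
  -- volume estimate
  calc volume (Metric.thickening ε (f '' closedBall 0 1))
      ≤ volume (⋃ k ∈ S, ball (f (g k)) r) := measure_mono hincl
    _ ≤ ∑ k ∈ S, volume (ball (f (g k)) r) := measure_biUnion_finset_le S _
    _ = S.card * ((ENNReal.ofReal r) ^ 6 * ENNReal.ofReal K) := by
        simp_rw [EuclideanSpace.volume_ball]
        rw [Finset.sum_const, nsmul_eq_mul]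
        norm_num [Fintype.card_fin, hK]
    _ ≤ ENNReal.ofReal ((9 ^ 4 * (1 + L / 2) ^ 6 * K) * ε ^ 2) := by
        have hcard : S.card = (2 * m + 1) ^ 4 := by
          rw [hS, Fintype.card_piFinset]
          have : (Finset.Icc (-(m : ℤ)) (m : ℤ)).card = 2 * m + 1 := by
            rw [Int.card_Icc]; omega
          simp [this]
        have hma : (2 * (m : ℝ) + 1) ≤ 9 / ε := by
          have h1 : (⌈2 / ε⌉₊ : ℝ) < 2 / ε + 1 := Nat.ceil_lt_add_one (by positivity)
          have h1' : (⌈2 / ε⌉₊ : ℝ) * ε < 2 + ε := by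
            have := mul_lt_mul_of_pos_right h1 hε
            rwa [add_mul, div_mul_cancel₀ _ hε.ne', one_mul] at this
          rw [hm, le_div_iff₀ hε]
          push_cast
          nlinarith
        have hreal : ((2 * m + 1 : ℕ) : ℝ) ^ 4 * (r ^ 6 * K)
            ≤ 9 ^ 4 * (1 + L / 2) ^ 6 * K * ε ^ 2 := by
          have hpow : ((2 * m + 1 : ℕ) : ℝ) ^ 4 ≤ (9 / ε) ^ 4 := by
            apply pow_le_pow_left₀ (by positivity)
            rw [hm] at hma ⊢; push_cast at hma ⊢; linarith
          calc ((2 * m + 1 : ℕ) : ℝ) ^ 4 * (r ^ 6 * K)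
              ≤ (9 / ε) ^ 4 * (r ^ 6 * K) := by
                apply mul_le_mul_of_nonneg_right hpow (by positivity)
            _ = 9 ^ 4 * (1 + L / 2) ^ 6 * K * ε ^ 2 := by
                rw [hr, mul_pow]
                field_simp
        calc (S.card : ENNReal) * (ENNReal.ofReal r ^ 6 * ENNReal.ofReal K)
            = ENNReal.ofReal (((2 * m + 1 : ℕ) : ℝ) ^ 4 * (r ^ 6 * K)) := by
              rw [hcard, ← ENNReal.ofReal_pow hrpos.le, ← ENNReal.ofReal_mul (by positivity),
                ← ENNReal.ofReal_natCast ((2 * m + 1) ^ 4), ← ENNReal.ofReal_mul (by positivity)]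
              push_cast
              ring_nf
          _ ≤ ENNReal.ofReal (9 ^ 4 * (1 + L / 2) ^ 6 * K * ε ^ 2) :=
              ENNReal.ofReal_le_ofReal hreal
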